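/- Let 0 < α < 1 and ρ > 0, set λ₀ = ρ/√(1−α) and θ₀ = θ(λ₀), and let 0 < R < θ₀. Then the phase ψ_R has exactly two stationary points in (0,∞): λ₁ ∈ (0, λ₀) and λ₂ ∈ (λ₀, ∞) (the two solutions of θ(λ) = R). Moreover there exist constants c, C > 0, depending only on α and ρ, such that c·R ≤ λ₁ ≤ C·R and c·R^{−1/(1−α)} ≤ λ₂ ≤ C·R^{−1/(1−α)}; in addition θ(λ) ≤ α·(λ² + ρ²)^{−(1−α)/2} for all λ ≥ 0, and consequently λ₂ ≤ √(λ₂² + ρ²) ≤ (R/α)^{−1/(1−α)}. -/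

import Mathlib

set_option maxHeartbeats 1000000


/-- `θ(λ) = α·λ·(λ² + ρ²)^{−(1−α/2)}`. -/
noncomputable def theta (α ρ lam : ℝ) : ℝ :=
  α * lam * (lam ^ 2 + ρ ^ 2) ^ (-(1 - α / 2))

/-- The phase `ψ_R(λ) = (λ² + ρ²)^{α/2} − R·λ`, so that `ψ_R′(λ) = θ(λ) − R`. -/
noncomputable def psi (α ρ R lam : ℝ) : ℝ :=
  (lam ^ 2 + ρ ^ 2) ^ (α / 2) - R * lam

lemma theta_cont {α ρ : ℝ} (hρ : 0 < ρ) : Continuous (theta α ρ) := by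
  unfold theta
  refine Continuous.mul (by continuity) (Continuous.rpow_const (by continuity) ?_)
  intro x; left; positivity

lemma theta_hasDerivAt {α ρ : ℝ} (hρ : 0 < ρ) (x : ℝ) :
    HasDerivAt (theta α ρ)
      (α * (x ^ 2 + ρ ^ 2) ^ (-(1 - α / 2) - 1) * (ρ ^ 2 - (1 - α) * x ^ 2)) x := by
  have hb : 0 < x ^ 2 + ρ ^ 2 := by positivity
  have h1 : HasDerivAt (fun l : ℝ => l ^ 2 + ρ ^ 2) (2 * x) x := by
    simpa using (hasDerivAt_pow 2 x).add_const (ρ ^ 2)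
  have h2 := h1.rpow_const (p := -(1 - α / 2)) (Or.inl hb.ne')
  have h3 : HasDerivAt (fun l : ℝ => α * l) α x := by
    simpa using (hasDerivAt_id x).const_mul α
  have h4 := h3.mul h2
  have hexp : (x ^ 2 + ρ ^ 2) ^ (-(1 - α / 2)) =
      (x ^ 2 + ρ ^ 2) ^ (-(1 - α / 2) - 1) * (x ^ 2 + ρ ^ 2) := by
    rw [← Real.rpow_add_one hb.ne', sub_add_cancel]
  exact h4.congr_deriv (by rw [hexp]; ring)

lemma lam0_sq {α ρ : ℝ} (hα1 : α < 1) :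
    (ρ / Real.sqrt (1 - α)) ^ 2 = ρ ^ 2 / (1 - α) := by
  rw [div_pow, Real.sq_sqrt (by linarith)]

lemma theta_mono {α ρ : ℝ} (hα0 : 0 < α) (hα1 : α < 1) (hρ : 0 < ρ) :
    StrictMonoOn (theta α ρ) (Set.Icc 0 (ρ / Real.sqrt (1 - α))) := by
  have h1α : 0 < 1 - α := by linarith
  apply strictMonoOn_of_deriv_pos (convex_Icc _ _) (theta_cont hρ).continuousOn
  intro x hx
  rw [interior_Icc] at hx
  rw [(theta_hasDerivAt hρ x).deriv]
  have hb : (0:ℝ) < (x ^ 2 + ρ ^ 2) ^ (-(1 - α / 2) - 1) := Real.rpow_pos_of_pos (by positivity) _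
  have hx2 : x ^ 2 < ρ ^ 2 / (1 - α) := by
    rw [← lam0_sq hα1]
    exact pow_lt_pow_left₀ hx.2 hx.1.le (by norm_num)
  have : (1 - α) * x ^ 2 < ρ ^ 2 := by
    rw [lt_div_iff₀ h1α] at hx2; linarith
  exact mul_pos (mul_pos hα0 hb) (by linarith)

lemma theta_anti {α ρ : ℝ} (hα0 : 0 < α) (hα1 : α < 1) (hρ : 0 < ρ) :
    StrictAntiOn (theta α ρ) (Set.Ici (ρ / Real.sqrt (1 - α))) := by
  have h1α : 0 < 1 - α := by linarith
  have hl0 : 0 < ρ / Real.sqrt (1 - α) := by positivity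
  apply strictAntiOn_of_deriv_neg (convex_Ici _) (theta_cont hρ).continuousOn
  intro x hx
  rw [interior_Ici] at hx
  rw [(theta_hasDerivAt hρ x).deriv]
  have hb : (0:ℝ) < (x ^ 2 + ρ ^ 2) ^ (-(1 - α / 2) - 1) := Real.rpow_pos_of_pos (by positivity) _
  have hx2 : ρ ^ 2 / (1 - α) < x ^ 2 := by
    rw [← lam0_sq hα1]
    exact pow_lt_pow_left₀ hx hl0.le (by norm_num)
  have : ρ ^ 2 < (1 - α) * x ^ 2 := by
    rw [div_lt_iff₀ h1α] at hx2; linarith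
  exact mul_neg_of_pos_of_neg (mul_pos hα0 hb) (by linarith)

lemma theta_le {α ρ : ℝ} (hα0 : 0 < α) (hρ : 0 < ρ) (lam : ℝ) (h : 0 ≤ lam) :
    theta α ρ lam ≤ α * (lam ^ 2 + ρ ^ 2) ^ (-((1 - α) / 2)) := by
  have hb : (0:ℝ) < lam ^ 2 + ρ ^ 2 := by positivity
  have hl : lam ≤ (lam ^ 2 + ρ ^ 2) ^ ((1:ℝ)/2) := by
    rw [← Real.sqrt_eq_rpow]
    calc lam = Real.sqrt (lam ^ 2) := (Real.sqrt_sq h).symm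
    _ ≤ _ := Real.sqrt_le_sqrt (by nlinarith)
  have h2 : α * lam * (lam ^ 2 + ρ ^ 2) ^ (-(1 - α / 2)) ≤
      α * (lam ^ 2 + ρ ^ 2) ^ ((1:ℝ)/2) * (lam ^ 2 + ρ ^ 2) ^ (-(1 - α / 2)) := by
    have := Real.rpow_pos_of_pos hb (-(1 - α / 2))
    gcongr
  unfold theta
  refine h2.trans (le_of_eq ?_)
  rw [mul_assoc, ← Real.rpow_add hb]
  ring_nf

lemma theta_le_pow {α ρ : ℝ} (hα0 : 0 < α) (hα1 : α < 1) (hρ : 0 < ρ) (lam : ℝ) (h : 0 < lam) :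
    theta α ρ lam ≤ α * lam ^ (α - 1) := by
  refine (theta_le hα0 hρ lam h.le).trans ?_
  have h2 : (lam ^ 2 + ρ ^ 2) ^ (-((1 - α) / 2)) ≤ (lam ^ 2) ^ (-((1 - α) / 2)) :=
    Real.rpow_le_rpow_of_nonpos (by positivity) (by nlinarith) (by linarith)
  have h3 : (lam ^ 2 : ℝ) ^ (-((1 - α) / 2)) = lam ^ (α - 1) := by
    rw [← Real.rpow_natCast lam 2, ← Real.rpow_mul h.le]
    norm_num
    ring_nf
  rw [← h3]
  exact mul_le_mul_of_nonneg_left h2 hα0.le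

theorem stmt4 (α ρ : ℝ) (hα0 : 0 < α) (hα1 : α < 1) (hρ : 0 < ρ)
    (lam0 θ0 : ℝ) (hlam0 : lam0 = ρ / Real.sqrt (1 - α)) (hθ0 : θ0 = theta α ρ lam0) :
    -- ψ_R has exactly two stationary points in (0, ∞):
    -- λ₁ ∈ (0, λ₀) and λ₂ ∈ (λ₀, ∞), the two solutions of θ(λ) = R
    (∀ R : ℝ, 0 < R → R < θ0 →
      ∃ lam1 lam2 : ℝ, lam1 ∈ Set.Ioo 0 lam0 ∧ lam2 ∈ Set.Ioi lam0 ∧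
        theta α ρ lam1 = R ∧ theta α ρ lam2 = R ∧
        (∀ lam : ℝ, 0 < lam → theta α ρ lam = R → lam = lam1 ∨ lam = lam2)) ∧
    -- comparability constants depending only on α and ρ
    (∃ c C : ℝ, 0 < c ∧ 0 < C ∧
      ∀ R lam1 lam2 : ℝ, 0 < R → R < θ0 →
        lam1 ∈ Set.Ioo 0 lam0 → theta α ρ lam1 = R →
        lam2 ∈ Set.Ioi lam0 → theta α ρ lam2 = R →
          (c * R ≤ lam1 ∧ lam1 ≤ C * R) ∧
          (c * R ^ (-(1 / (1 - α))) ≤ lam2 ∧ lam2 ≤ C * R ^ (-(1 / (1 - α))))) ∧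
    -- θ(λ) ≤ α·(λ² + ρ²)^{−(1−α)/2} for all λ ≥ 0
    (∀ lam : ℝ, 0 ≤ lam → theta α ρ lam ≤ α * (lam ^ 2 + ρ ^ 2) ^ (-((1 - α) / 2))) ∧
    -- consequently λ₂ ≤ √(λ₂² + ρ²) ≤ (R/α)^{−1/(1−α)}
    (∀ R lam2 : ℝ, 0 < R → R < θ0 → lam2 ∈ Set.Ioi lam0 → theta α ρ lam2 = R →
      lam2 ≤ Real.sqrt (lam2 ^ 2 + ρ ^ 2) ∧
      Real.sqrt (lam2 ^ 2 + ρ ^ 2) ≤ (R / α) ^ (-(1 / (1 - α)))) := by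
  have h1α : 0 < 1 - α := by linarith
  have hl0 : 0 < lam0 := by rw [hlam0]; positivity
  have hmono : StrictMonoOn (theta α ρ) (Set.Icc 0 lam0) := by
    rw [hlam0]; exact theta_mono hα0 hα1 hρ
  have hanti : StrictAntiOn (theta α ρ) (Set.Ici lam0) := by
    rw [hlam0]; exact theta_anti hα0 hα1 hρ
  have htheta0 : theta α ρ 0 = 0 := by simp [theta]
  have hsneg : -(1 / (1 - α)) ≤ (0:ℝ) := neg_nonpos.mpr (by positivity)
  refine ⟨?_, ?_, fun lam h => theta_le hα0 hρ lam h, ?_⟩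
  · -- part 1
    intro R hR0 hRθ
    have hIoo : R ∈ Set.Ioo (theta α ρ 0) (theta α ρ lam0) := by
      rw [htheta0, ← hθ0]; exact ⟨hR0, hRθ⟩
    obtain ⟨lam1, hmem1, hval1⟩ :=
      intermediate_value_Ioo hl0.le (theta_cont hρ).continuousOn hIoo
    set M := max (lam0 + 1) ((α / R) ^ ((1:ℝ)/(1-α)) + 1) with hM
    have hl0M : lam0 < M := lt_of_lt_of_le (lt_add_one _) (le_max_left _ _)
    have hM0 : 0 < M := hl0.trans hl0M
    have hMbig : (α / R) ^ ((1:ℝ)/(1-α)) < M :=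
      lt_of_lt_of_le (lt_add_one _) (le_max_right _ _)
    have hαR : (0:ℝ) ≤ α / R := by positivity
    have hpow : α / R < M ^ (1 - α) := by
      have h := Real.rpow_lt_rpow (Real.rpow_nonneg hαR _) hMbig h1α
      rwa [← Real.rpow_mul hαR, one_div_mul_cancel h1α.ne', Real.rpow_one] at h
    have hθM : theta α ρ M < R := by
      refine lt_of_le_of_lt (theta_le_pow hα0 hα1 hρ M hM0) ?_
      have ht : (0:ℝ) < M ^ (1 - α) := Real.rpow_pos_of_pos hM0 _
      have hMe : M ^ (α - 1) = (M ^ (1 - α))⁻¹ := by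
        rw [show α - 1 = -(1 - α) by ring, Real.rpow_neg hM0.le]
      rw [hMe, ← div_eq_mul_inv, div_lt_iff₀ ht]
      rw [div_lt_iff₀ hR0] at hpow
      nlinarith
    have hIoo2 : R ∈ Set.Ioo (theta α ρ M) (theta α ρ lam0) :=
      ⟨hθM, by rw [← hθ0]; exact hRθ⟩
    obtain ⟨lam2, hmem2, hval2⟩ :=
      intermediate_value_Ioo' hl0M.le (theta_cont hρ).continuousOn hIoo2
    refine ⟨lam1, lam2, hmem1, hmem2.1, hval1, hval2, ?_⟩
    intro lam hlam hval
    rcases lt_trichotomy lam lam0 with h | h | h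
    · left
      exact hmono.injOn ⟨hlam.le, h.le⟩ ⟨hmem1.1.le, hmem1.2.le⟩ (hval.trans hval1.symm)
    · exfalso
      rw [h] at hval
      rw [hθ0, hval] at hRθ
      exact lt_irrefl R hRθ
    · right
      exact hanti.injOn (Set.mem_Ici.2 h.le) (Set.mem_Ici.2 hmem2.1.le) (hval.trans hval2.symm)
  · -- part 2
    have h2α : (0:ℝ) < 2 - α := by linarith
    set c1 : ℝ := 1 / (α * (ρ^2) ^ (-(1 - α/2))) with hc1
    set C1 : ℝ := 1 / (α * (lam0^2 + ρ^2) ^ (-(1 - α/2))) with hC1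
    set C2 : ℝ := α ^ ((1:ℝ)/(1-α)) with hC2
    set c2 : ℝ := (α * (2-α) ^ (-(1 - α/2))) ^ ((1:ℝ)/(1-α)) with hc2
    have hK1 : 0 < α * (ρ^2) ^ (-(1 - α/2)) := by positivity
    have hKL : 0 < α * (lam0^2 + ρ^2) ^ (-(1 - α/2)) := by positivity
    have hK2 : 0 < α * (2-α) ^ (-(1 - α/2)) := by positivity
    have hc1p : 0 < c1 := by rw [hc1]; positivity
    have hC1p : 0 < C1 := by rw [hC1]; positivity
    have hC2p : 0 < C2 := by rw [hC2]; positivity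
    have hc2p : 0 < c2 := by rw [hc2]; positivity
    refine ⟨min c1 c2, max C1 C2, lt_min hc1p hc2p, lt_of_lt_of_le hC1p (le_max_left _ _), ?_⟩
    intro R lam1 lam2 hR0 hRθ hmem1 hval1 hmem2 hval2
    have hl1 : 0 < lam1 := hmem1.1
    have hl2 : 0 < lam2 := hl0.trans hmem2
    have hb1 : (0:ℝ) < lam1^2 + ρ^2 := by positivity
    have hb2 : (0:ℝ) < lam2^2 + ρ^2 := by positivity
    have hRs : (0:ℝ) < R ^ (-(1 / (1 - α))) := Real.rpow_pos_of_pos hR0 _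
    constructor
    · constructor
      · -- c * R ≤ lam1
        have key : R ≤ lam1 * (α * (ρ^2) ^ (-(1 - α/2))) := by
          calc R = theta α ρ lam1 := hval1.symm
          _ ≤ α * lam1 * (ρ^2) ^ (-(1 - α/2)) := by
              unfold theta
              exact mul_le_mul_of_nonneg_left
                (Real.rpow_le_rpow_of_nonpos (by positivity) (by nlinarith) (by linarith))
                (by positivity)
          _ = lam1 * (α * (ρ^2) ^ (-(1 - α/2))) := by ring
        have h1 : c1 * R ≤ lam1 := by
          rw [hc1, one_div, inv_mul_eq_div, div_le_iff₀ hK1]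
          linarith
        calc min c1 c2 * R ≤ c1 * R := by gcongr; exact min_le_left _ _
        _ ≤ lam1 := h1
      · -- lam1 ≤ C * R
        have key : lam1 * (α * (lam0^2 + ρ^2) ^ (-(1 - α/2))) ≤ R := by
          calc lam1 * (α * (lam0^2 + ρ^2) ^ (-(1 - α/2)))
              = α * lam1 * (lam0^2 + ρ^2) ^ (-(1 - α/2)) := by ring
          _ ≤ α * lam1 * (lam1^2 + ρ^2) ^ (-(1 - α/2)) := by
              refine mul_le_mul_of_nonneg_left
                (Real.rpow_le_rpow_of_nonpos hb1 ?_ (by linarith)) (by positivity)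
              have := hmem1.2
              nlinarith
          _ = theta α ρ lam1 := rfl
          _ = R := hval1
        have h1 : lam1 ≤ C1 * R := by
          rw [hC1, one_div, inv_mul_eq_div, le_div_iff₀ hKL]
          linarith
        calc lam1 ≤ C1 * R := h1
        _ ≤ max C1 C2 * R := by gcongr; exact le_max_left _ _
    · constructor
      · -- c * R^(-s) ≤ lam2
        have hrl2 : lam2^2 + ρ^2 ≤ (2-α) * lam2^2 := by
          have hsq : ρ^2 / (1-α) ≤ lam2^2 := by
            rw [← lam0_sq hα1, ← hlam0]
            exact pow_le_pow_left₀ hl0.le (le_of_lt hmem2) 2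
          rw [div_le_iff₀ h1α] at hsq
          nlinarith
        have hsplit2 : ((2-α) * lam2^2 : ℝ) ^ (-(1 - α/2))
            = (2-α) ^ (-(1 - α/2)) * lam2 ^ (α - 2) := by
          rw [Real.mul_rpow h2α.le (by positivity), ← Real.rpow_natCast lam2 2,
            ← Real.rpow_mul hl2.le]
          congr 1
          push_cast; ring
        have hsplit3 : lam2 ^ (α - 1) = lam2 * lam2 ^ (α - 2) := by
          rw [show α - 1 = 1 + (α - 2) by ring, Real.rpow_add hl2, Real.rpow_one]
        have key3 : α * (2-α) ^ (-(1 - α/2)) * lam2 ^ (α - 1) ≤ R := by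
          calc α * (2-α) ^ (-(1 - α/2)) * lam2 ^ (α - 1)
              = α * lam2 * ((2-α) * lam2^2) ^ (-(1 - α/2)) := by
                rw [hsplit2, hsplit3]; ring
          _ ≤ α * lam2 * (lam2^2 + ρ^2) ^ (-(1 - α/2)) :=
              mul_le_mul_of_nonneg_left
                (Real.rpow_le_rpow_of_nonpos hb2 hrl2 (by linarith)) (by positivity)
          _ = theta α ρ lam2 := rfl
          _ = R := hval2
        have h5 : lam2 ^ (α - 1) ≤ R / (α * (2-α) ^ (-(1 - α/2))) := by
          rw [le_div_iff₀ hK2, mul_comm]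
          exact key3
        have h6 := Real.rpow_le_rpow_of_nonpos
          (Real.rpow_pos_of_pos hl2 (α - 1)) h5 hsneg
        have hLHS : ((lam2 ^ (α - 1) : ℝ)) ^ (-(1 / (1 - α))) = lam2 := by
          rw [← Real.rpow_mul hl2.le,
            show (α - 1) * -(1 / (1 - α)) = 1 by field_simp; ring, Real.rpow_one]
        have hRHS : (R / (α * (2-α) ^ (-(1 - α/2)))) ^ (-(1 / (1 - α)))
            = c2 * R ^ (-(1 / (1 - α))) := by
          rw [Real.rpow_neg (div_nonneg hR0.le hK2.le), Real.div_rpow hR0.le hK2.le, inv_div,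
            div_eq_mul_inv, ← Real.rpow_neg hR0.le]
        rw [hLHS, hRHS] at h6
        exact le_trans (mul_le_mul_of_nonneg_right (min_le_right c1 c2) hRs.le) h6
      · -- lam2 ≤ C * R^(-s)
        have key2 : R ≤ α * lam2 ^ (α - 1) := by
          rw [← hval2]; exact theta_le_pow hα0 hα1 hρ lam2 hl2
        have ht : (0:ℝ) < lam2 ^ (1 - α) := Real.rpow_pos_of_pos hl2 _
        have he : lam2 ^ (α - 1) = (lam2 ^ (1 - α))⁻¹ := by
          rw [show α - 1 = -(1 - α) by ring, Real.rpow_neg hl2.le]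
        have h1 : lam2 ^ (1 - α) ≤ α / R := by
          rw [le_div_iff₀ hR0]
          rw [he] at key2
          calc lam2 ^ (1 - α) * R ≤ lam2 ^ (1 - α) * (α * (lam2 ^ (1 - α))⁻¹) := by
                exact mul_le_mul_of_nonneg_left key2 ht.le
          _ = α := by field_simp
        have h2 : lam2 ≤ (α / R) ^ ((1:ℝ)/(1-α)) := by
          have hz : (0:ℝ) ≤ (1:ℝ)/(1-α) := by positivity
          have h := Real.rpow_le_rpow (Real.rpow_nonneg hl2.le (1 - α)) h1 hz
          rwa [← Real.rpow_mul hl2.le,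
            show (1 - α) * ((1:ℝ)/(1-α)) = 1 by field_simp, Real.rpow_one] at h
        have hsplit : (α / R) ^ ((1:ℝ)/(1-α)) = C2 * R ^ (-(1 / (1 - α))) := by
          rw [Real.div_rpow hα0.le hR0.le, Real.rpow_neg hR0.le, div_eq_mul_inv, hC2]
        refine (h2.trans_eq hsplit).trans ?_
        exact mul_le_mul_of_nonneg_right (le_max_right C1 C2) hRs.le
  · -- part 4
    intro R lam2 hR0 hRθ hmem2 hval2
    have hl2 : 0 < lam2 := hl0.trans hmem2
    have hb : (0:ℝ) < lam2^2 + ρ^2 := by positivity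
    constructor
    · calc lam2 = Real.sqrt (lam2^2) := (Real.sqrt_sq hl2.le).symm
      _ ≤ _ := Real.sqrt_le_sqrt (by nlinarith)
    · have key := theta_le hα0 hρ lam2 hl2.le
      rw [hval2] at key
      have h1 : R / α ≤ (lam2^2 + ρ^2) ^ (-((1 - α)/2)) := by
        rw [div_le_iff₀ hα0, mul_comm]
        exact key
      have h6 := Real.rpow_le_rpow_of_nonpos (by positivity) h1 hsneg
      have heq : (((lam2^2 + ρ^2) ^ (-((1 - α)/2))) : ℝ) ^ (-(1 / (1 - α)))
          = Real.sqrt (lam2^2 + ρ^2) := by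
        rw [← Real.rpow_mul hb.le,
          show -((1 - α)/2) * -(1 / (1 - α)) = 1/2 by field_simp,
          Real.sqrt_eq_rpow]
      rw [heq] at h6
      exact h6
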